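/- Let T be a stochastic matrix of the block form T = [[1, 0^T], [1 − T̂1, T̂]] where T̂ has spectral radius less than 1. Then K(T) = trace((I − T̂)^{−1}), and consequently K(T) ≥ Σ_j 1/(1 − t̂_{jj}), with equality when T̂ is diagonal. -/

import Mathlib

open Finset Matrix

def IsStochastic {n : ℕ} (T : Matrix (Fin n) (Fin n) ℝ) : Prop :=
  (∀ i j, 0 ≤ T i j) ∧ ∀ i, ∑ j, T i j = 1

noncomputable def kemeny {n : ℕ} (T : Matrix (Fin n) (Fin n) ℝ) : ℝ :=
  ((((Matrix.charpoly (T.map (Complex.ofReal))).roots.erase 1).map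
      (fun z => (1 - z)⁻¹)).sum).re

namespace KemAux

open Polynomial Filter Topology
open scoped NNReal ENNReal

/-! ### Characteristic polynomial factorization for the absorbing block structure -/

lemma charm_sub {n : ℕ} (M : Matrix (Fin (n+1)) (Fin (n+1)) ℂ) :
    (charmatrix M).submatrix Fin.succ Fin.succ = charmatrix (M.submatrix Fin.succ Fin.succ) := by
  ext i j
  by_cases h : i = j
  · subst h; simp [charmatrix_apply_eq]
  · rw [submatrix_apply, charmatrix_apply_ne _ _ _ h,
      charmatrix_apply_ne _ _ _ (fun hc => h (Fin.succ_injective _ hc)), submatrix_apply]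

lemma charpoly_absorbing {n : ℕ} (M : Matrix (Fin (n+1)) (Fin (n+1)) ℂ)
    (h0 : ∀ j, M 0 j = if j = 0 then 1 else 0) :
    M.charpoly = (X - C 1) * (M.submatrix Fin.succ Fin.succ).charpoly := by
  rw [Matrix.charpoly, Matrix.det_succ_row_zero]
  rw [Finset.sum_eq_single 0]
  · rw [Fin.succAbove_zero, charm_sub, charmatrix_apply_eq, h0]
    simp [Matrix.charpoly]
  · intro j _ hj
    rw [charmatrix_apply_ne _ _ _ (Ne.symm hj), h0, if_neg hj]
    simp
  · simp

/-! ### Polynomial lemmas -/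

lemma deriv_eval_one (S : Multiset ℂ) (h : ∀ z ∈ S, z ≠ 1) :
    eval 1 (derivative (S.map fun a => X - C a).prod)
      = eval 1 (S.map fun a => X - C a).prod * (S.map fun z => (1 - z)⁻¹).sum := by
  induction S using Multiset.induction_on with
  | empty => simp
  | cons a S ih =>
    have ha : (1 : ℂ) - a ≠ 0 := sub_ne_zero.mpr (Ne.symm (h a (Multiset.mem_cons_self a S)))
    have ih' := ih (fun z hz => h z (Multiset.mem_cons_of_mem hz))
    simp only [Multiset.map_cons, Multiset.prod_cons, derivative_mul, derivative_X_sub_C,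
      eval_add, eval_mul, eval_one, eval_sub, eval_X, eval_C, one_mul, Multiset.sum_cons]
    rw [ih']
    field_simp

lemma eval_one_charpoly {n : ℕ} (A : Matrix (Fin n) (Fin n) ℂ) :
    A.charpoly.eval 1 = det (1 - A) := by
  rw [Matrix.charpoly, ← coe_evalRingHom,
    show (evalRingHom 1) (A.charmatrix.det) = ((evalRingHom 1).mapMatrix A.charmatrix).det
      from RingHom.map_det _ _, RingHom.mapMatrix_apply]
  congr 1
  ext i j
  by_cases h : i = j
  · subst h; simp [charmatrix_apply_eq]
  · simp [charmatrix_apply_ne _ _ _ h, Matrix.one_apply_ne h]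

lemma eval_charpoly' {n : ℕ} (A : Matrix (Fin n) (Fin n) ℂ) (x : ℂ) :
    A.charpoly.eval x = det (x • (1 : Matrix (Fin n) (Fin n) ℂ) - A) := by
  rw [Matrix.charpoly, ← coe_evalRingHom,
    show (evalRingHom x) (A.charmatrix.det) = ((evalRingHom x).mapMatrix A.charmatrix).det
      from RingHom.map_det _ _, RingHom.mapMatrix_apply]
  congr 1
  ext i j
  by_cases h : i = j
  · subst h; simp [charmatrix_apply_eq, Matrix.one_apply]
  · simp [charmatrix_apply_ne _ _ _ h, Matrix.one_apply_ne h]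

/-! ### Jacobi-type formula -/

lemma deriv_charpoly_eval_one {n : ℕ} (A : Matrix (Fin n) (Fin n) ℂ)
    (hB : IsUnit (1 - A).det) :
    A.charpoly.derivative.eval 1 = det (1 - A) * Matrix.trace (1 - A)⁻¹ := by
  set B := 1 - A with hBdef
  set q : ℂ[X] := A.charpoly.comp (X + C 1) with hq
  have hq1 : q = det ((charmatrix A).map (eval₂RingHom C (X + C 1))) := by
    rw [hq, Matrix.charpoly]
    rw [show A.charmatrix.det.comp (X + C 1) = (eval₂RingHom C (X + C 1)) A.charmatrix.det from rfl,
      RingHom.map_det, RingHom.mapMatrix_apply]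
  have hmat : (charmatrix A).map (eval₂RingHom C (X + C 1)) = B.map C + (X : ℂ[X]) • 1 := by
    ext i j
    by_cases h : i = j
    · subst h
      simp [charmatrix_apply_eq, hBdef, Matrix.one_apply, Matrix.add_apply, map_sub,
        sub_eq_iff_eq_add]
      ring
    · simp [charmatrix_apply_ne _ _ _ h, hBdef, Matrix.one_apply_ne h, Matrix.add_apply]
  have hfac : B.map C + (X : ℂ[X]) • 1 = B.map C * (1 + (X : ℂ[X]) • (B⁻¹).map C) := by
    rw [mul_add, mul_one, mul_smul_comm, ← Matrix.map_mul, Matrix.mul_nonsing_inv _ hB,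
      Matrix.map_one _ (map_zero C) (map_one C)]
  have hq2 : q = C (det B) * det (1 + (X : ℂ[X]) • (B⁻¹).map C) := by
    rw [hq1, hmat, hfac, det_mul, ← RingHom.mapMatrix_apply, ← RingHom.map_det]
  have hd : q.derivative.eval 0 = det B * Matrix.trace B⁻¹ := by
    rw [hq2, derivative_mul, derivative_C, zero_mul, eval_add, eval_zero, zero_add, eval_mul,
      eval_C, Matrix.derivative_det_one_add_X_smul]
  have hd2 : q.derivative.eval 0 = A.charpoly.derivative.eval 1 := by
    rw [hq, derivative_comp, eval_mul, eval_comp]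
    simp
  rw [← hd2, hd]

lemma det_one_sub_ne_zero {n : ℕ} (A : Matrix (Fin n) (Fin n) ℂ)
    (h1 : ∀ z ∈ A.charpoly.roots, z ≠ 1) : det (1 - A) ≠ 0 := by
  have hm := A.charpoly_monic
  have hfact : A.charpoly = (A.charpoly.roots.map fun a => X - C a).prod :=
    (IsAlgClosed.splits _).eq_prod_roots_of_monic hm
  rw [← eval_one_charpoly]
  nth_rw 1 [hfact]
  rw [eval_multiset_prod, Multiset.map_map]
  apply Multiset.prod_ne_zero
  intro h0
  simp only [Multiset.mem_map, Function.comp_apply, eval_sub, eval_X, eval_C] at h0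
  obtain ⟨a, ha, ha0⟩ := h0
  exact h1 a ha (by linear_combination -ha0)

lemma sum_inv_eq_trace {n : ℕ} (A : Matrix (Fin n) (Fin n) ℂ)
    (h1 : ∀ z ∈ A.charpoly.roots, z ≠ 1) :
    (A.charpoly.roots.map fun z => (1 - z)⁻¹).sum = Matrix.trace (1 - A)⁻¹ := by
  have hm := A.charpoly_monic
  have hfact : A.charpoly = (A.charpoly.roots.map fun a => X - C a).prod :=
    (IsAlgClosed.splits _).eq_prod_roots_of_monic hm
  have hdet : det (1 - A) ≠ 0 := det_one_sub_ne_zero A h1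
  have hJ := deriv_charpoly_eval_one A (isUnit_iff_ne_zero.mpr hdet)
  have hD : A.charpoly.derivative.eval 1
      = A.charpoly.eval 1 * (A.charpoly.roots.map fun z => (1 - z)⁻¹).sum := by
    nth_rw 1 [hfact]; nth_rw 2 [hfact]
    exact deriv_eval_one _ h1
  rw [eval_one_charpoly] at hD
  rw [hD] at hJ
  exact mul_left_cancel₀ hdet hJ

/-! ### Transfer between real and complex matrices -/

lemma map_mulC {n : ℕ} (M N : Matrix (Fin n) (Fin n) ℝ) :
    (M * N).map Complex.ofReal = M.map Complex.ofReal * N.map Complex.ofReal := by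
  ext i j
  simp [Matrix.mul_apply, Matrix.map_apply]

lemma map_oneC {n : ℕ} : (1 : Matrix (Fin n) (Fin n) ℝ).map Complex.ofReal = 1 := by
  ext i j
  by_cases h : i = j <;> simp [h, Matrix.one_apply]

lemma map_one_sub {n : ℕ} (M : Matrix (Fin n) (Fin n) ℝ) :
    (1 - M).map Complex.ofReal = 1 - M.map Complex.ofReal := by
  ext i j
  by_cases h : i = j <;> simp [h, Matrix.one_apply, Matrix.map_apply]

lemma det_mapC {n : ℕ} (M : Matrix (Fin n) (Fin n) ℝ) :
    (M.map Complex.ofReal).det = (M.det : ℂ) := by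
  rw [show M.map Complex.ofReal = M.map Complex.ofRealHom from rfl, ← RingHom.mapMatrix_apply,
    ← RingHom.map_det]
  rfl

lemma map_inv_ofReal {n : ℕ} (M : Matrix (Fin n) (Fin n) ℝ) (hdet : det (1 - M) ≠ 0) :
    ((1 - M)⁻¹).map Complex.ofReal = (1 - M.map Complex.ofReal)⁻¹ := by
  refine (Matrix.inv_eq_right_inv ?_).symm
  rw [← map_one_sub, ← map_mulC, Matrix.mul_nonsing_inv _ (isUnit_iff_ne_zero.mpr hdet), map_oneC]

lemma map_pow_ofReal {n : ℕ} (M : Matrix (Fin n) (Fin n) ℝ) (k : ℕ) :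
    (M ^ k).map Complex.ofReal = (M.map Complex.ofReal) ^ k := by
  induction k with
  | zero => simpa using map_oneC
  | succ k ih => rw [pow_succ, pow_succ, map_mulC, ih]

/-! ### Spectrum and Neumann series -/

lemma spectrum_subset_roots {n : ℕ} (A : Matrix (Fin n) (Fin n) ℂ) :
    spectrum ℂ A ⊆ {z | z ∈ A.charpoly.roots} := by
  intro z hz
  rw [spectrum.mem_iff] at hz
  have hdet : det (algebraMap ℂ (Matrix (Fin n) (Fin n) ℂ) z - A) = 0 := by
    by_contra h
    exact hz ((Matrix.isUnit_iff_isUnit_det _).mpr (isUnit_iff_ne_zero.mpr h))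
  have : A.charpoly.eval z = 0 := by
    rw [eval_charpoly', ← Algebra.algebraMap_eq_smul_one, hdet]
  simp only [Set.mem_setOf_eq, mem_roots, A.charpoly_monic.ne_zero, ne_eq,
    not_false_eq_true, true_and, IsRoot.def, this]

attribute [local instance] Matrix.linftyOpNormedRing Matrix.linftyOpNormedAlgebra

lemma summable_pow_matrix {n : ℕ} [Nonempty (Fin n)] (A : Matrix (Fin n) (Fin n) ℂ)
    (h1 : ∀ z ∈ A.charpoly.roots, ‖z‖ < 1) :
    Summable (fun k : ℕ => A ^ k) ∧ (1 - A) * (∑' k : ℕ, A ^ k) = 1 := by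
  letI : CompleteSpace (Matrix (Fin n) (Fin n) ℂ) :=
    by infer_instance
  have hρ : spectralRadius ℂ A < (1 : ℝ≥0) := by
    apply spectrum.spectralRadius_lt_of_forall_lt
    intro z hz
    have := h1 z (spectrum_subset_roots A hz)
    rw [← coe_nnnorm] at this
    exact_mod_cast this
  have hgel := spectrum.pow_nnnorm_pow_one_div_tendsto_nhds_spectralRadius A
  obtain ⟨r, hρr, hr1⟩ := ENNReal.lt_iff_exists_nnreal_btwn.mp (by exact_mod_cast hρ)
  have hr1' : (r : ℝ) < 1 := by exact_mod_cast hr1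
  have hev : ∀ᶠ k : ℕ in atTop, (‖A ^ k‖₊ : ℝ≥0∞) ^ (1 / (k : ℝ)) < r :=
    hgel.eventually_lt_const hρr
  have hbound : ∀ᶠ k : ℕ in atTop, ‖A ^ k‖ ≤ (r : ℝ) ^ k := by
    filter_upwards [hev, eventually_ge_atTop 1] with k hk hk1
    have hk0 : (k : ℝ) ≠ 0 := Nat.cast_ne_zero.mpr (by omega)
    have h2 : ((‖A ^ k‖₊ : ℝ≥0∞) ^ (1 / (k : ℝ))) ^ (k : ℝ) ≤ (r : ℝ≥0∞) ^ (k : ℝ) :=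
      ENNReal.rpow_le_rpow hk.le (by positivity)
    rw [← ENNReal.rpow_mul, one_div, inv_mul_cancel₀ hk0, ENNReal.rpow_one] at h2
    have h3 : (‖A ^ k‖₊ : ℝ≥0∞) ≤ (r ^ k : ℝ≥0) := by
      rw [ENNReal.rpow_natCast] at h2
      exact_mod_cast h2
    have h4 : ‖A ^ k‖₊ ≤ r ^ k := by exact_mod_cast h3
    calc ‖A ^ k‖ = (‖A ^ k‖₊ : ℝ) := (coe_nnnorm _).symm
    _ ≤ ((r ^ k : ℝ≥0) : ℝ) := by exact_mod_cast h4
    _ = (r : ℝ) ^ k := by push_cast; ring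
  have hS : Summable (fun k : ℕ => A ^ k) := by
    apply Summable.of_norm_bounded_eventually_nat (g := ((r : ℝ) ^ ·))
    · exact summable_geometric_of_lt_one r.coe_nonneg hr1'
    · exact hbound
  refine ⟨hS, ?_⟩
  have hAk0 : Tendsto (fun k : ℕ => A ^ k) atTop (𝓝 0) := by
    apply squeeze_zero_norm' hbound
    exact tendsto_pow_atTop_nhds_zero_of_lt_one r.coe_nonneg hr1'
  have hS2 : Summable (fun k : ℕ => A ^ k - A ^ (k + 1)) :=
    hS.sub ((summable_nat_add_iff 1).mpr hS)
  have htel : HasSum (fun k : ℕ => A ^ k - A ^ (k + 1)) 1 := by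
    rw [hS2.hasSum_iff_tendsto_nat]
    have : ∀ N : ℕ, ∑ i ∈ Finset.range N, (A ^ i - A ^ (i + 1)) = A ^ 0 - A ^ N := by
      intro N; exact Finset.sum_range_sub' (fun i => A ^ i) N
    simp only [this, pow_zero]
    simpa using tendsto_const_nhds.sub hAk0
  have hmul : HasSum (fun k : ℕ => (1 - A) * A ^ k) ((1 - A) * ∑' k : ℕ, A ^ k) :=
    hS.hasSum.mul_left _
  have heq : (fun k : ℕ => (1 - A) * A ^ k) = fun k : ℕ => A ^ k - A ^ (k + 1) := by
    funext k; rw [sub_mul, one_mul, pow_succ']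
  rw [heq] at hmul
  exact hmul.unique htel

lemma hasSum_diag {n : ℕ} (Th : Matrix (Fin n) (Fin n) ℝ) (j : Fin n)
    (h1 : ∀ z ∈ (Th.map Complex.ofReal).charpoly.roots, ‖z‖ < 1) :
    HasSum (fun k : ℕ => (Th ^ k) j j) ((1 - Th)⁻¹ j j) := by
  haveI : Nonempty (Fin n) := ⟨j⟩
  set A := Th.map Complex.ofReal with hA
  obtain ⟨hS, hmul⟩ := summable_pow_matrix A h1
  have hne1 : ∀ z ∈ A.charpoly.roots, z ≠ 1 := by
    intro z hz h
    have := h1 z hz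
    rw [h] at this; simp at this
  have hdetC : det (1 - A) ≠ 0 := det_one_sub_ne_zero A hne1
  have hdetR : det (1 - Th) ≠ 0 := by
    intro h
    apply hdetC
    rw [← map_one_sub, det_mapC, h]
    simp
  have hinvC : (1 - A)⁻¹ = ∑' k : ℕ, A ^ k := Matrix.inv_eq_right_inv hmul
  let φ : Matrix (Fin n) (Fin n) ℂ →+ ℂ := AddMonoidHom.mk' (fun M => M j j) (fun _ _ => rfl)
  have hcont : Continuous φ := by
    show Continuous (fun M : Matrix (Fin n) (Fin n) ℂ => M j j)
    exact (continuous_apply j).comp (continuous_apply j)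
  have hφ : HasSum (fun k : ℕ => (A ^ k) j j) ((1 - A)⁻¹ j j) := by
    rw [hinvC]
    exact hS.hasSum.map φ hcont
  have hre := hφ.mapL Complex.reCLM
  have h2 : ∀ k : ℕ, Complex.reCLM ((A ^ k) j j) = (Th ^ k) j j := by
    intro k
    rw [hA, ← map_pow_ofReal]
    simp [Matrix.map_apply]
  have h3 : Complex.reCLM ((1 - A)⁻¹ j j) = (1 - Th)⁻¹ j j := by
    rw [hA, ← map_inv_ofReal Th hdetR]
    simp [Matrix.map_apply]
  rw [h3] at hre
  convert hre using 1
  funext k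
  exact (h2 k).symm

end KemAux

open KemAux Polynomial in
theorem kemeny_absorbing_block
    (n : ℕ) (T : Matrix (Fin (n + 1)) (Fin (n + 1)) ℝ) (hT : IsStochastic T)
    (Th : Matrix (Fin n) (Fin n) ℝ)
    (hTh : Th = T.submatrix Fin.succ Fin.succ)
    (hrow0 : ∀ j : Fin (n + 1), T 0 j = if j = 0 then 1 else 0)
    (hcol0 : ∀ i : Fin n, T i.succ 0 = 1 - ∑ j, Th i j)
    (hspec : ∀ z ∈ (Matrix.charpoly (Th.map (Complex.ofReal))).roots, ‖z‖ < 1) :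
    kemeny T = Matrix.trace (1 - Th)⁻¹ ∧
    (∑ j, (1 - Th j j)⁻¹) ≤ kemeny T ∧
    ((∀ i j, i ≠ j → Th i j = 0) → kemeny T = ∑ j, (1 - Th j j)⁻¹) := by
  set A := Th.map Complex.ofReal with hA
  have h1 : ∀ z ∈ A.charpoly.roots, z ≠ 1 := by
    intro z hz h
    have := hspec z hz
    rw [h] at this; simp at this
  -- Part 1 : kemeny T = trace (1 - Th)⁻¹
  have hsub : (T.map Complex.ofReal).submatrix Fin.succ Fin.succ = A := by
    rw [hA, hTh, Matrix.submatrix_map]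
  have hrow0c : ∀ j : Fin (n+1), (T.map Complex.ofReal) 0 j = if j = 0 then 1 else 0 := by
    intro j
    simp [Matrix.map_apply, hrow0 j, apply_ite Complex.ofReal]
  have hcp : (T.map Complex.ofReal).charpoly = (X - C 1) * A.charpoly := by
    rw [charpoly_absorbing _ hrow0c, hsub]
  have hroots : (T.map Complex.ofReal).charpoly.roots = 1 ::ₘ A.charpoly.roots := by
    rw [hcp, Polynomial.roots_mul (((monic_X_sub_C (1:ℂ)).mul A.charpoly_monic).ne_zero),
      roots_X_sub_C, Multiset.singleton_add]
  have herase : ((T.map Complex.ofReal).charpoly.roots.erase 1) = A.charpoly.roots := by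
    rw [hroots, Multiset.erase_cons_head]
  have hdetC : det (1 - A) ≠ 0 := det_one_sub_ne_zero A h1
  have hdetR : det (1 - Th) ≠ 0 := by
    intro h
    apply hdetC
    rw [hA, ← map_one_sub, det_mapC, h]
    simp
  have htr : Matrix.trace ((1 - A)⁻¹) = ((Matrix.trace (1 - Th)⁻¹ : ℝ) : ℂ) := by
    rw [hA, ← map_inv_ofReal Th hdetR]
    simp [Matrix.trace, Matrix.diag, Matrix.map_apply]
  have part1 : kemeny T = Matrix.trace (1 - Th)⁻¹ := by
    rw [kemeny, herase, sum_inv_eq_trace A h1, htr, Complex.ofReal_re]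
  refine ⟨part1, ?_, ?_⟩
  -- Part 2 : the inequality
  · have hTh0 : ∀ i j, 0 ≤ Th i j := by
      intro i j
      rw [hTh]
      exact hT.1 _ _
    have hpow0 : ∀ k : ℕ, ∀ i j, 0 ≤ (Th ^ k) i j := by
      intro k
      induction k with
      | zero =>
        intro i j
        by_cases h : i = j <;> simp [h, Matrix.one_apply]
      | succ k ih =>
        intro i j
        rw [pow_succ, Matrix.mul_apply]
        exact Finset.sum_nonneg fun l _ => mul_nonneg (ih i l) (hTh0 l j)
    have hgeo : ∀ (j : Fin n) (k : ℕ), (Th j j) ^ k ≤ (Th ^ k) j j := by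
      intro j k
      induction k with
      | zero => simp [Matrix.one_apply]
      | succ k ih =>
        rw [pow_succ, pow_succ, Matrix.mul_apply]
        calc Th j j ^ k * Th j j ≤ (Th ^ k) j j * Th j j :=
              mul_le_mul_of_nonneg_right ih (hTh0 j j)
        _ ≤ ∑ l, (Th ^ k) j l * Th l j := by
              apply Finset.single_le_sum (f := fun l => (Th ^ k) j l * Th l j)
                (fun l _ => mul_nonneg (hpow0 k j l) (hTh0 l j)) (Finset.mem_univ j)
    rw [part1, Matrix.trace]
    apply Finset.sum_le_sum
    intro j _
    have hd := hasSum_diag Th j hspec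
    have hsg : Summable (fun k : ℕ => (Th j j) ^ k) :=
      Summable.of_nonneg_of_le (fun k => pow_nonneg (hTh0 j j) k) (hgeo j) hd.summable
    have hlt1 : Th j j < 1 := by
      have := summable_geometric_iff_norm_lt_one.mp hsg
      rwa [Real.norm_eq_abs, abs_of_nonneg (hTh0 j j)] at this
    calc (1 - Th j j)⁻¹ = ∑' k : ℕ, (Th j j) ^ k :=
          (tsum_geometric_of_lt_one (hTh0 j j) hlt1).symm
    _ ≤ ∑' k : ℕ, (Th ^ k) j j := Summable.tsum_le_tsum (hgeo j) hsg hd.summable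
    _ = (1 - Th)⁻¹ j j := hd.tsum_eq
    _ = Matrix.diag (1 - Th)⁻¹ j := rfl
  -- Part 3 : equality in the diagonal case
  · intro hdiag
    have hdTh : (1 : Matrix (Fin n) (Fin n) ℝ) - Th = Matrix.diagonal (fun j => 1 - Th j j) := by
      ext i j
      by_cases h : i = j
      · subst h; simp [Matrix.one_apply, Matrix.diagonal]
      · simp [Matrix.one_apply_ne h, Matrix.diagonal_apply_ne _ h, hdiag i j h]
    have hdj : ∀ j, (1 : ℝ) - Th j j ≠ 0 := by
      intro j hj
      apply hdetR
      rw [hdTh, Matrix.det_diagonal]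
      exact Finset.prod_eq_zero (Finset.mem_univ j) hj
    have hinvd : ((1 : Matrix (Fin n) (Fin n) ℝ) - Th)⁻¹
        = Matrix.diagonal (fun j => ((1 : ℝ) - Th j j)⁻¹) := by
      apply Matrix.inv_eq_right_inv
      rw [hdTh, Matrix.diagonal_mul_diagonal]
      convert Matrix.diagonal_one with j
      exact mul_inv_cancel₀ (hdj j)
    rw [part1, hinvd, Matrix.trace_diagonal]
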